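/- Let R be a finite non-commutative ring of odd order n with Z(R) = {0}. Then γ(Γ(R)) = (n-1)/2 if and only if Γ(R) is a disjoint union of (n-1)/2 copies of P₂ (every vertex has degree exactly 1); moreover, in that case n = 3^k for some integer k > 1. -/

import Mathlib

open scoped Classical

noncomputable section

/-- The commuting graph of a (non-unital, possibly non-commutative) ring `R`:
vertices are the non-central elements, and two distinct vertices are adjacent
iff they commute. -/
def commutingGraph (R : Type*) [NonUnitalRing R] :
    SimpleGraph {x : R // x ∉ Set.center R} where
  Adj a b := a ≠ b ∧ (a : R) * b = (b : R) * a
  symm := by constructor; rintro a b ⟨h1, h2⟩; exact ⟨h1.symm, h2.symm⟩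
  loopless := by constructor; rintro a ⟨h, -⟩; exact h rfl

/-- A dominating set: every vertex not in `D` is adjacent to some vertex of `D`. -/
def SimpleGraph.IsDominatingSet {V : Type*} (G : SimpleGraph V) (D : Finset V) : Prop :=
  ∀ v, v ∉ D → ∃ u ∈ D, G.Adj u v

/-- The domination number: the minimum cardinality of a dominating set. -/
noncomputable def SimpleGraph.dominationNumber {V : Type*} [Fintype V] (G : SimpleGraph V) : ℕ :=
  sInf {n | ∃ D : Finset V, G.IsDominatingSet D ∧ D.card = n}

/-- The signed domination number: the minimum total weight of a function
`f : V → {-1, 1}` whose sum over every closed neighbourhood is at least `1`. -/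
noncomputable def SimpleGraph.signedDominationNumber {V : Type*} [Fintype V]
    (G : SimpleGraph V) : ℤ :=
  sInf {w : ℤ | ∃ f : V → ℤ, (∀ v, f v = 1 ∨ f v = -1) ∧
    (∀ v : V, 1 ≤ ∑ u ∈ Finset.univ.filter (fun u => G.Adj v u ∨ u = v), f u) ∧
    w = ∑ v, f v}

/-- Underlying type of the ring `E`. -/
def Ering : Type := ZMod 2 × ZMod 2

instance : Fintype Ering := inferInstanceAs (Fintype (ZMod 2 × ZMod 2))
instance : DecidableEq Ering := inferInstanceAs (DecidableEq (ZMod 2 × ZMod 2))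
instance : AddCommGroup Ering := inferInstanceAs (AddCommGroup (ZMod 2 × ZMod 2))
instance : Mul Ering := ⟨fun a b => (b.1 * a.1, b.1 * a.2)⟩

/-- `E = ⟨x,y : 2x=2y=0, x²=x, y²=y, xy=x, yx=y⟩`, realized on `ZMod 2 × ZMod 2`
with `x = (1,0)`, `y = (1,1)` and multiplication `a * b = (b₁a₁, b₁a₂)`. -/
instance : NonUnitalRing Ering :=
  { (inferInstanceAs (AddCommGroup Ering) : AddCommGroup Ering), (inferInstanceAs (Mul Ering) : Mul Ering) with
    left_distrib := by decide
    right_distrib := by decide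
    zero_mul := by decide
    mul_zero := by decide
    mul_assoc := by decide }

/-- Underlying type of the ring `F`. -/
def Fring : Type := ZMod 2 × ZMod 2

instance : Fintype Fring := inferInstanceAs (Fintype (ZMod 2 × ZMod 2))
instance : DecidableEq Fring := inferInstanceAs (DecidableEq (ZMod 2 × ZMod 2))
instance : AddCommGroup Fring := inferInstanceAs (AddCommGroup (ZMod 2 × ZMod 2))
instance : Mul Fring := ⟨fun a b => (a.1 * b.1, a.1 * b.2)⟩

/-- `F = ⟨x,y : 2x=2y=0, x²=x, y²=y, xy=y, yx=x⟩`, realized on `ZMod 2 × ZMod 2`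
with `x = (1,0)`, `y = (1,1)` and multiplication `a * b = (a₁b₁, a₁b₂)`. -/
instance : NonUnitalRing Fring :=
  { (inferInstanceAs (AddCommGroup Fring) : AddCommGroup Fring), (inferInstanceAs (Mul Fring) : Mul Fring) with
    left_distrib := by decide
    right_distrib := by decide
    zero_mul := by decide
    mul_zero := by decide
    mul_assoc := by decide }

lemma aux_add_self {R : Type*} [NonUnitalRing R] [Fintype R]
    (hn : Odd (Fintype.card R)) {x : R} (h : x + x = 0) : x = 0 := by
  have h2 : addOrderOf x ∣ 2 := addOrderOf_dvd_of_nsmul_eq_zero (by rw [two_nsmul]; exact h)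
  have hc : addOrderOf x ∣ Fintype.card R := addOrderOf_dvd_card
  rcases (Nat.dvd_prime Nat.prime_two).1 h2 with h1 | h1
  · exact AddMonoid.addOrderOf_eq_one_iff.mp h1
  · rw [h1] at hc; rw [Nat.odd_iff] at hn; omega

lemma aux_card3 {R : Type*} [NonUnitalRing R] [Fintype R]
    (hc : Fintype.card R = 3) (x y : R) : x * y = y * x := by
  have hn : Odd (Fintype.card R) := by rw [hc]; decide
  by_cases hx : x = 0; · simp [hx]
  by_cases hy : y = 0; · simp [hy]
  by_cases hxy : x = y; · rw [hxy]
  have hne : x ≠ -x := fun h => hx (aux_add_self hn (by rw [← neg_eq_iff_add_eq_zero]; exact h.symm))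
  have huniv : ({0, x, -x} : Finset R) = Finset.univ := by
    apply Finset.eq_univ_of_card
    rw [hc]
    rw [Finset.card_insert_of_notMem (by
      simp only [Finset.mem_insert, Finset.mem_singleton]
      push_neg
      exact ⟨Ne.symm hx, fun h => hx (neg_eq_zero.mp h.symm)⟩),
      Finset.card_insert_of_notMem (by simpa using hne), Finset.card_singleton]
  have hy' : y ∈ ({0, x, -x} : Finset R) := huniv ▸ Finset.mem_univ y
  simp only [Finset.mem_insert, Finset.mem_singleton] at hy'
  rcases hy' with h | h | h
  · exact absurd h hy
  · exact absurd h.symm hxy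
  · rw [h, mul_neg, neg_mul]

/-- For odd `n`, `γ(Γ(R)) = (n-1)/2` iff `Γ(R)` is a disjoint union of `(n-1)/2`
copies of `P₂` (every vertex has degree exactly `1`); moreover in that case
`n = 3^k` for some `k > 1`. -/
theorem stmt_8 (R : Type*) [NonUnitalRing R] [Fintype R] (n : ℕ)
    (hcard : Fintype.card R = n) (hn : Odd n)
    (hnc : ∃ x y : R, x * y ≠ y * x)
    (hz : Set.center R = {0}) :
    ((commutingGraph R).dominationNumber = (n - 1) / 2 ↔
      ∀ v, (commutingGraph R).degree v = 1) ∧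
    ((commutingGraph R).dominationNumber = (n - 1) / 2 → ∃ k : ℕ, 1 < k ∧ n = 3 ^ k) := by
  subst hcard
  set G := commutingGraph R with hG
  have hmem : ∀ x : R, x ∉ Set.center R ↔ x ≠ 0 := by intro x; rw [hz]; rfl
  have hvne : ∀ v : {x : R // x ∉ Set.center R}, (v : R) ≠ 0 := fun v => (hmem v).1 v.2
  -- the negation involution on vertices
  let ν : {x : R // x ∉ Set.center R} → {x : R // x ∉ Set.center R} :=
    fun v => ⟨-(v : R), (hmem _).2 (fun h => hvne v (neg_eq_zero.mp h))⟩
  have hνν : ∀ v, ν (ν v) = v := fun v => Subtype.ext (neg_neg _)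
  have hνne : ∀ v, ν v ≠ v := by
    intro v h
    have h2 : -(v : R) = v := congrArg Subtype.val h
    have hvv : (v : R) + (v : R) = 0 := by nth_rewrite 1 [← h2]; exact neg_add_cancel _
    exact hvne v (aux_add_self hn hvv)
  have hνadj : ∀ v, G.Adj v (ν v) := by
    intro v
    exact ⟨Ne.symm (hνne v), by show (v:R) * (-(v:R)) = (-(v:R)) * v; rw [mul_neg, neg_mul]⟩
  -- counting vertices
  have hVcard : Fintype.card {x : R // x ∉ Set.center R} = Fintype.card R - 1 := by
    have e1 : {x : R // x ∉ Set.center R} ≃ {x : R // ¬ (x = 0)} :=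
      Equiv.subtypeEquivRight (fun x => hmem x)
    rw [Fintype.card_congr e1, Fintype.card_subtype_compl, Fintype.card_subtype_eq]
  -- the half-set S
  let e := Fintype.equivFin {x : R // x ∉ Set.center R}
  let S : Finset {x : R // x ∉ Set.center R} :=
    Finset.univ.filter fun v => (e v : ℕ) < (e (ν v) : ℕ)
  have hSmem : ∀ v, v ∈ S ↔ (e v : ℕ) < (e (ν v) : ℕ) := by
    intro v; simp [S]
  have heνne : ∀ v, (e v : ℕ) ≠ (e (ν v) : ℕ) := by
    intro v h
    exact hνne v (e.injective (Fin.ext h.symm))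
  have hS1 : ∀ v, v ∉ S → ν v ∈ S := by
    intro v hv
    rw [hSmem] at hv ⊢
    rw [hνν]
    rcases lt_or_gt_of_ne (heνne v) with h | h
    · exact absurd h hv
    · exact h
  have hS2 : ∀ v, v ∈ S → ν v ∉ S := by
    intro v hv h
    rw [hSmem] at hv h
    rw [hνν] at h
    exact lt_asymm hv h
  have hScard : 2 * S.card = Fintype.card {x : R // x ∉ Set.center R} := by
    classical
    set T : Finset {x : R // x ∉ Set.center R} :=
      Finset.univ.filter (fun v => (e (ν v) : ℕ) < (e v : ℕ)) with hT
    have hST : S.card = T.card := by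
      apply Finset.card_bij' (fun v _ => ν v) (fun v _ => ν v)
      · intro a ha
        simp only [S, Finset.mem_filter, Finset.mem_univ, true_and] at ha
        simp only [T, Finset.mem_filter, Finset.mem_univ, true_and]
        rw [hνν]; exact ha
      · intro a ha
        simp only [T, Finset.mem_filter, Finset.mem_univ, true_and] at ha
        simp only [S, Finset.mem_filter, Finset.mem_univ, true_and]
        rw [hνν]; exact ha
      · intro a _; exact hνν a
      · intro a _; exact hνν a
    have hdisj : Disjoint S T := by
      rw [Finset.disjoint_left]
      intro a ha hb
      simp only [S, Finset.mem_filter, Finset.mem_univ, true_and] at ha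
      simp only [T, Finset.mem_filter, Finset.mem_univ, true_and] at hb
      exact lt_asymm ha hb
    have huniv : S ∪ T = Finset.univ := by
      apply Finset.eq_univ_of_forall
      intro v
      rw [Finset.mem_union]
      simp only [S, T, Finset.mem_filter, Finset.mem_univ, true_and]
      rcases lt_or_gt_of_ne (heνne v) with h | h
      · exact Or.inl h
      · exact Or.inr h
    have := Finset.card_union_of_disjoint hdisj
    rw [huniv, Finset.card_univ] at this
    omega
  have hSdom : G.IsDominatingSet S := fun v hv => ⟨ν v, hS1 v hv, (hνadj v).symm⟩
  have hle : G.dominationNumber ≤ S.card := Nat.sInf_le ⟨S, hSdom, rfl⟩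
  have hcardhalf : S.card = (Fintype.card R - 1) / 2 := by
    rw [hVcard] at hScard; omega
  -- lower bound under degree-one hypothesis
  have hlow : (∀ v, G.degree v = 1) → ∀ D : Finset {x : R // x ∉ Set.center R},
      G.IsDominatingSet D → S.card ≤ D.card := by
    intro hdeg D hD
    have hf : ∀ v, ∃ u, u ∈ D ∧ (u = v ∨ G.Adj u v) := by
      intro v
      by_cases hv : v ∈ D
      · exact ⟨v, hv, Or.inl rfl⟩
      · obtain ⟨u, hu, hadj⟩ := hD v hv; exact ⟨u, hu, Or.inr hadj⟩
    choose f hfD hfadj using hf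
    have hbig : Fintype.card {x : R // x ∉ Set.center R} ≤ 2 * D.card := by
      rw [← Finset.card_univ]
      refine Finset.card_le_mul_card_image_of_maps_to (f := f) (t := D)
        (fun v _ => hfD v) 2 ?_
      intro u _
      have hsub : {a ∈ (Finset.univ : Finset {x : R // x ∉ Set.center R}) | f a = u} ⊆ insert u (G.neighborFinset u) := by
        intro v hv
        simp only [Finset.mem_filter, Finset.mem_univ, true_and] at hv
        rcases hfadj v with h | h
        · rw [hv] at h
          rw [Finset.mem_insert]; exact Or.inl h.symm
        · rw [hv] at h
          rw [Finset.mem_insert, SimpleGraph.mem_neighborFinset]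
          exact Or.inr h
      calc {a ∈ (Finset.univ : Finset {x : R // x ∉ Set.center R}) | f a = u}.card ≤ (insert u (G.neighborFinset u)).card :=
            Finset.card_le_card hsub
        _ ≤ (G.neighborFinset u).card + 1 := Finset.card_insert_le _ _
        _ = 2 := by rw [SimpleGraph.card_neighborFinset_eq_degree, hdeg u]
    omega
  -- equality from degree-one hypothesis
  have hmpr : (∀ v, G.degree v = 1) → G.dominationNumber = (Fintype.card R - 1) / 2 := by
    intro hdeg
    have hne : {m | ∃ D : Finset {x : R // x ∉ Set.center R},
        G.IsDominatingSet D ∧ D.card = m}.Nonempty := ⟨S.card, S, hSdom, rfl⟩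
    obtain ⟨D, hD, hDc⟩ := Nat.sInf_mem hne
    have h1 : S.card ≤ G.dominationNumber := by
      rw [show G.dominationNumber = D.card from hDc.symm]
      exact hlow hdeg D hD
    rw [← hcardhalf]
    omega
  -- main forward direction
  have hmp : G.dominationNumber = (Fintype.card R - 1) / 2 → ∀ v, G.degree v = 1 := by
    intro hdom
    by_contra hcon
    push_neg at hcon
    obtain ⟨v, hv⟩ := hcon
    have hw : ∃ w, G.Adj v w ∧ w ≠ ν v := by
      by_contra h
      push_neg at h
      apply hv
      have hNv : G.neighborFinset v = {ν v} := by
        apply Finset.eq_singleton_iff_unique_mem.mpr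
        constructor
        · rw [SimpleGraph.mem_neighborFinset]; exact hνadj v
        · intro w hwmem
          exact h w ((SimpleGraph.mem_neighborFinset _ _ _).1 hwmem)
      show (G.neighborFinset v).card = 1
      rw [hNv, Finset.card_singleton]
    obtain ⟨w, hvw, hwνv⟩ := hw
    -- distinctness facts
    have hvw' : v ≠ w := hvw.ne
    have hvνw : v ≠ ν w := by
      intro h
      apply hwνv
      rw [h, hνν]
    have hνvνw : ν v ≠ ν w := by
      intro h
      apply hvw'
      rw [← hνν v, h, hνν]
    have hwνw : w ≠ ν w := Ne.symm (hνne w)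
    have hvνv : v ≠ ν v := Ne.symm (hνne v)
    have hνvw : ν v ≠ w := Ne.symm hwνv
    -- the set of special vertices
    set B : Finset {x : R // x ∉ Set.center R} := {v, ν v, w, ν w} with hB
    have hBν : ∀ u, u ∈ B → ν u ∈ B := by
      intro u hu
      simp only [B, Finset.mem_insert, Finset.mem_singleton] at hu ⊢
      rcases hu with h | h | h | h
      · rw [h]; exact Or.inr (Or.inl rfl)
      · rw [h, hνν]; exact Or.inl rfl
      · rw [h]; exact Or.inr (Or.inr (Or.inr rfl))
      · rw [h, hνν]; exact Or.inr (Or.inr (Or.inl rfl))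
    have hBcard : B.card = 4 := by
      rw [hB]
      rw [Finset.card_insert_of_notMem (by simp [hvνv, hvw', hvνw]),
        Finset.card_insert_of_notMem (by simp [hνvw, hνvνw]),
        Finset.card_insert_of_notMem (by simp [hwνw]), Finset.card_singleton]
    have hS4 : 2 ≤ S.card := by
      have : B.card ≤ Fintype.card {x : R // x ∉ Set.center R} := by
        rw [← Finset.card_univ]; exact Finset.card_le_card (Finset.subset_univ B)
      omega
    -- representatives of the two pairs inside S
    set a : {x : R // x ∉ Set.center R} := if w ∈ S then w else ν w with ha
    set b : {x : R // x ∉ Set.center R} := if v ∈ S then v else ν v with hb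
    have haS : a ∈ S := by
      rw [ha]; split
      · assumption
      · exact hS1 w (by assumption)
    have hbS : b ∈ S := by
      rw [hb]; split
      · assumption
      · exact hS1 v (by assumption)
    have haB : a ∈ B := by
      rw [ha]; split <;> simp [B]
    have hbB : b ∈ B := by
      rw [hb]; split <;> simp [B]
    have hab : a ≠ b := by
      rw [ha, hb]
      split <;> split
      · exact Ne.symm hvw'
      · exact Ne.symm hνvw
      · exact Ne.symm hvνw
      · exact Ne.symm hνvνw
    -- the smaller dominating set
    set D : Finset {x : R // x ∉ Set.center R} := insert v (S \ B) with hD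
    have hadjvνw : G.Adj v (ν w) := by
      refine ⟨hvνw, ?_⟩
      show (v : R) * (-(w : R)) = (-(w : R)) * v
      rw [mul_neg, neg_mul, hvw.2]
    have hDdom : G.IsDominatingSet D := by
      intro u hu
      by_cases huB : u ∈ B
      · simp only [B, Finset.mem_insert, Finset.mem_singleton] at huB
        rcases huB with h | h | h | h
        · exfalso; apply hu; rw [hD, h]; exact Finset.mem_insert_self _ _
        · exact ⟨v, Finset.mem_insert_self _ _, by rw [h]; exact hνadj v⟩
        · exact ⟨v, Finset.mem_insert_self _ _, by rw [h]; exact hvw⟩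
        · exact ⟨v, Finset.mem_insert_self _ _, by rw [h]; exact hadjvνw⟩
      · have huS : u ∉ S := by
          intro h
          apply hu
          rw [hD, Finset.mem_insert]
          exact Or.inr (Finset.mem_sdiff.mpr ⟨h, huB⟩)
        have hνuS : ν u ∈ S := hS1 u huS
        have hνuB : ν u ∉ B := by
          intro h
          apply huB
          rw [← hνν u]
          exact hBν _ h
        refine ⟨ν u, ?_, (hνadj u).symm⟩
        rw [hD, Finset.mem_insert]
        exact Or.inr (Finset.mem_sdiff.mpr ⟨hνuS, hνuB⟩)
    have habS : ({a, b} : Finset _) ⊆ S := by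
      intro x hx
      simp only [Finset.mem_insert, Finset.mem_singleton] at hx
      rcases hx with h | h
      · rw [h]; exact haS
      · rw [h]; exact hbS
    have habB : ({a, b} : Finset _) ⊆ B := by
      intro x hx
      simp only [Finset.mem_insert, Finset.mem_singleton] at hx
      rcases hx with h | h
      · rw [h]; exact haB
      · rw [h]; exact hbB
    have hDcard : D.card ≤ S.card - 1 := by
      have h1 : D.card ≤ (S \ B).card + 1 := Finset.card_insert_le _ _
      have h2 : (S \ B) ⊆ S \ {a, b} := Finset.sdiff_subset_sdiff (le_refl _) habB
      have h3 : (S \ ({a, b} : Finset _)).card = S.card - 2 := by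
        rw [Finset.card_sdiff_of_subset habS, Finset.card_insert_of_notMem (by simpa using hab),
          Finset.card_singleton]
      have h4 : (S \ B).card ≤ S.card - 2 := h3 ▸ Finset.card_le_card h2
      omega
    have hfin : G.dominationNumber ≤ D.card := Nat.sInf_le ⟨D, hDdom, rfl⟩
    rw [hdom] at hfin
    rw [← hcardhalf] at hdom
    omega
  refine ⟨⟨hmp, hmpr⟩, ?_⟩
  intro hdom
  have hdeg := hmp hdom
  -- every nonzero element satisfies 3x = 0
  have huniq : ∀ v u, G.Adj v u → u = ν v := by
    intro v u h
    have h1 : u ∈ G.neighborFinset v := (SimpleGraph.mem_neighborFinset _ _ _).2 h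
    have h2 : ν v ∈ G.neighborFinset v := (SimpleGraph.mem_neighborFinset _ _ _).2 (hνadj v)
    have hc : (G.neighborFinset v).card ≤ 1 := le_of_eq (hdeg v)
    exact Finset.card_le_one.mp hc u h1 (ν v) h2
  have h3 : ∀ x : R, x + x + x = 0 := by
    intro x
    by_cases hx : x = 0
    · simp [hx]
    have hxx : x + x ≠ 0 := fun h => hx (aux_add_self hn h)
    have hxxne : x + x ≠ x := fun h => hx (add_eq_right.mp h)
    set v : {x : R // x ∉ Set.center R} := ⟨x, (hmem x).2 hx⟩ with hv
    set u : {x : R // x ∉ Set.center R} := ⟨x + x, (hmem _).2 hxx⟩ with hu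
    have hadj : G.Adj v u := by
      refine ⟨?_, ?_⟩
      · intro h
        exact hxxne (congrArg Subtype.val h).symm
      · show x * (x + x) = (x + x) * x
        rw [mul_add, add_mul]
    have := huniq v u hadj
    have h2 : x + x = -x := congrArg Subtype.val this
    rw [h2, neg_add_cancel]
  haveI : Fact (Nat.Prime 3) := ⟨by norm_num⟩
  have hp : IsPGroup 3 (Multiplicative R) := by
    intro g
    refine ⟨1, ?_⟩
    have hg : g.toAdd + g.toAdd + g.toAdd = 0 := h3 _
    apply Multiplicative.toAdd.injective
    simp [pow_succ, toAdd_mul]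
    exact hg
  obtain ⟨k, hk⟩ := IsPGroup.iff_card.mp hp
  have hk' : Fintype.card R = 3 ^ k := by simpa using hk
  refine ⟨k, ?_, hk'⟩
  by_contra hk1
  push_neg at hk1
  interval_cases k
  · obtain ⟨x, y, hxy⟩ := hnc
    have : Fintype.card R = 1 := by rw [hk']; norm_num
    haveI := Fintype.card_le_one_iff_subsingleton.mp (le_of_eq this)
    exact hxy (by rw [Subsingleton.elim x y])
  · obtain ⟨x, y, hxy⟩ := hnc
    exact hxy (aux_card3 (by rw [hk']; norm_num) x y)


end
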